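/- Let n ≥ 2 be an integer, p > 1 a real number, A a symmetric n×n real matrix, and s a real number. Set h := (p−1)·A₁₁ + Σ_{i=2}^n A_{ii} + s and c₁ := 1 + min{1, (p−1)²/(2n−1)}. Then Σ_{i,j=1}^n A_{ij}² ≥ h²/(2n−1) − 2(p−1)·h·A₁₁/(2n−1) + c₁·Σ_{i=1}^n A_{1i}² − s²/n. -/
import Mathlib

open Finset

lemma key_real (N p a R Q T s : ℝ) (hN : 2 ≤ N) (hp : 1 < p)
    (hR : 0 ≤ R) (hQ : 0 ≤ Q) (hT : T ^ 2 ≤ (N - 1) * Q) :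
    ((p-1)*a+T+s)^2/(2*N-1) - 2*(p-1)*((p-1)*a+T+s)*a/(2*N-1)
      + (1 + min 1 ((p-1)^2/(2*N-1)))*(a^2+R) - s^2/N ≤ a^2 + 2*R + Q := by
  have h1 : (0:ℝ) < 2*N-1 := by linarith
  have h2 : (0:ℝ) < N := by linarith
  have h3 : (0:ℝ) < N - 1 := by linarith
  have hTQ : N*(2*N-1)*T^2 ≤ N*(2*N-1)*((N-1)*Q) :=
    mul_le_mul_of_nonneg_left hT (by positivity)
  have hsq := sq_nonneg (N*T - (N-1)*s)
  rcases le_total ((p-1)^2/(2*N-1)) 1 with hm | hm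
  · rw [min_eq_right hm, ← sub_nonneg]
    have hq : (p-1)^2 ≤ 2*N-1 := (div_le_one h1).mp hm
    have e : a^2+2*R+Q - (((p-1)*a+T+s)^2/(2*N-1) - 2*(p-1)*((p-1)*a+T+s)*a/(2*N-1)
        + (1 + (p-1)^2/(2*N-1))*(a^2+R) - s^2/N)
      = (N*(2*N-1)*(a^2+2*R+Q) - N*((p-1)*a+T+s)^2 + 2*(p-1)*((p-1)*a+T+s)*a*N
          - (N*(2*N-1) + N*(p-1)^2)*(a^2+R) + s^2*(2*N-1)) / (N*(2*N-1)) := by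
      field_simp; ring
    rw [e]
    apply div_nonneg _ (by positivity)
    nlinarith [mul_nonneg (mul_nonneg h2.le hR) (sub_nonneg.mpr hq), hsq, hTQ, h3]
  · rw [min_eq_left hm, ← sub_nonneg]
    have hq : 2*N-1 ≤ (p-1)^2 := (one_le_div h1).mp hm
    have e : a^2+2*R+Q - (((p-1)*a+T+s)^2/(2*N-1) - 2*(p-1)*((p-1)*a+T+s)*a/(2*N-1)
        + (1 + 1)*(a^2+R) - s^2/N)
      = (N*(2*N-1)*(a^2+2*R+Q) - N*((p-1)*a+T+s)^2 + 2*(p-1)*((p-1)*a+T+s)*a*N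
          - 2*N*(2*N-1)*(a^2+R) + s^2*(2*N-1)) / (N*(2*N-1)) := by
      field_simp; ring
    rw [e]
    apply div_nonneg _ (by positivity)
    nlinarith [mul_nonneg (mul_nonneg h2.le (sq_nonneg a)) (sub_nonneg.mpr hq), hsq, hTQ, h3]

theorem hessian_estimate (n : ℕ) (hn : 2 ≤ n) (p : ℝ) (hp : 1 < p)
    (A : Matrix (Fin n) (Fin n) ℝ) (hA : A.IsSymm) (s : ℝ)
    (h c₁ : ℝ)
    (hh : h = (p - 1) * A ⟨0, by omega⟩ ⟨0, by omega⟩ +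
      ∑ i ∈ univ.erase ⟨0, by omega⟩, A i i + s)
    (hc₁ : c₁ = 1 + min 1 ((p - 1) ^ 2 / (2 * (n : ℝ) - 1))) :
    ∑ i : Fin n, ∑ j : Fin n, (A i j) ^ 2 ≥
      h ^ 2 / (2 * (n : ℝ) - 1)
        - 2 * (p - 1) * h * A ⟨0, by omega⟩ ⟨0, by omega⟩ / (2 * (n : ℝ) - 1)
        + c₁ * ∑ i : Fin n, (A ⟨0, by omega⟩ i) ^ 2
        - s ^ 2 / (n : ℝ) := by
  set i0 : Fin n := ⟨0, by omega⟩ with hi0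
  set a : ℝ := A i0 i0 with ha
  set T : ℝ := ∑ i ∈ univ.erase i0, A i i with hTdef
  set Q : ℝ := ∑ i ∈ univ.erase i0, (A i i) ^ 2 with hQdef
  set R : ℝ := ∑ i ∈ univ.erase i0, (A i0 i) ^ 2 with hRdef
  have hN : (2:ℝ) ≤ (n:ℝ) := by exact_mod_cast hn
  have hrow : ∑ i : Fin n, (A i0 i) ^ 2 = a^2 + R := by
    rw [hRdef, ha, ← Finset.add_sum_erase univ (fun i => (A i0 i)^2) (mem_univ i0)]
  have hR0 : 0 ≤ R := Finset.sum_nonneg fun i _ => sq_nonneg _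
  have hQ0 : 0 ≤ Q := Finset.sum_nonneg fun i _ => sq_nonneg _
  have hcard : (univ.erase i0).card = n - 1 := by
    rw [Finset.card_erase_of_mem (mem_univ i0), Finset.card_univ, Fintype.card_fin]
  have hT : T ^ 2 ≤ ((n:ℝ) - 1) * Q := by
    have := sq_sum_le_card_mul_sum_sq (s := univ.erase i0) (f := fun i => A i i)
    rw [hcard] at this
    have hc : ((n - 1 : ℕ) : ℝ) = (n:ℝ) - 1 := by
      rw [Nat.cast_sub (by omega)]; norm_num
    calc T ^ 2 ≤ ((n-1:ℕ):ℝ) * Q := by exact_mod_cast this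
      _ = ((n:ℝ) - 1) * Q := by rw [hc]
  have hLHS : a^2 + 2*R + Q ≤ ∑ i : Fin n, ∑ j : Fin n, (A i j) ^ 2 := by
    rw [← Finset.add_sum_erase univ (fun i => ∑ j : Fin n, (A i j)^2) (mem_univ i0), hrow]
    have step : ∀ i ∈ univ.erase i0, (A i0 i)^2 + (A i i)^2 ≤ ∑ j : Fin n, (A i j)^2 := by
      intro i hi
      have hne : i ≠ i0 := Finset.ne_of_mem_erase hi
      have hsym : A i i0 = A i0 i := hA.apply i0 i
      calc (A i0 i)^2 + (A i i)^2 = ∑ j ∈ ({i0, i} : Finset (Fin n)), (A i j)^2 := by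
            rw [Finset.sum_pair (Ne.symm hne), hsym]
        _ ≤ ∑ j : Fin n, (A i j)^2 :=
            Finset.sum_le_sum_of_subset_of_nonneg (Finset.subset_univ _)
              (fun j _ _ => sq_nonneg _)
    have := Finset.sum_le_sum step
    rw [Finset.sum_add_distrib] at this
    linarith
  have key := key_real (n:ℝ) p a R Q T s hN hp hR0 hQ0 hT
  rw [hh, hc₁, hrow]
  linarith
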